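/- arXiv:math/0205149 — 2 statements merged into one kernel-verified Lean document; each statement's English description precedes it below -/
import Mathlib

section
/- Let G ⊊ SO(n) be a proper closed subgroup with Lie algebra 𝔤 ⊆ 𝔰𝔬(n) and let 𝔪 = 𝔤^⊥ be its orthogonal complement in 𝔰𝔬(n). Then the G-equivariant linear map ℝⁿ → ℝⁿ ⊗ 𝔪 given by X ↦ Σᵢ eᵢ ⊗ pr_𝔪(eᵢ ∧ X) (where e₁,…,eₙ is an orthonormal basis and eᵢ ∧ X denotes the skew-symmetric endomorphism Y ↦ ⟨eᵢ,Y⟩X − ⟨X,Y⟩eᵢ) is injective. Equivalently, ℝⁿ occurs as a subrepresentation of ℝⁿ ⊗ 𝔪. -/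
noncomputable section

/-- The matrix (indexed as an element of the Euclidean space of `n × n` matrices,
with the Frobenius inner product) of the skew-symmetric endomorphism
`u ∧ v : Y ↦ ⟨u,Y⟩v − ⟨v,Y⟩u`. -/
def wedgeE {n : ℕ} (u v : EuclideanSpace ℝ (Fin n)) :
    EuclideanSpace ℝ (Fin n × Fin n) :=
  (WithLp.equiv 2 _).symm fun p => v p.1 * u p.2 - u p.1 * v p.2

/-- Matrix multiplication in this model. -/
def mmulE {n : ℕ} (A B : EuclideanSpace ℝ (Fin n × Fin n)) :
    EuclideanSpace ℝ (Fin n × Fin n) :=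
  (WithLp.equiv 2 _).symm fun p => ∑ k, A (p.1, k) * B (k, p.2)

/- STATEMENT 1: if 𝔤 ⊊ 𝔰𝔬(n) is a proper Lie subalgebra (elements skew,
closed under commutator, not all of 𝔰𝔬(n)) and 𝔪 = 𝔤ᗮ ∩ 𝔰𝔬(n), then the map
ℝⁿ → ℝⁿ ⊗ 𝔪, X ↦ Σᵢ eᵢ ⊗ pr_𝔪(eᵢ ∧ X), is injective.  Since eᵢ ∧ X is
skew-symmetric and 𝔤 consists of skew matrices, pr_𝔪 = id − (orthogonal
projection onto 𝔤). -/
lemma wedgeE_apply {n : ℕ} (u v : EuclideanSpace ℝ (Fin n)) (p : Fin n × Fin n) :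
    wedgeE u v p = v p.1 * u p.2 - u p.1 * v p.2 := rfl

lemma mmulE_apply {n : ℕ} (A B : EuclideanSpace ℝ (Fin n × Fin n)) (p : Fin n × Fin n) :
    mmulE A B p = ∑ k, A (p.1, k) * B (k, p.2) := rfl

lemma wedgeE_sub {n : ℕ} (u X Y : EuclideanSpace ℝ (Fin n)) :
    wedgeE u X - wedgeE u Y = wedgeE u (X - Y) := by
  ext p
  simp only [PiLp.sub_apply, wedgeE_apply]
  ring

set_option maxHeartbeats 1000000 in
theorem stmt1 {n : ℕ} (𝔤 : Submodule ℝ (EuclideanSpace ℝ (Fin n × Fin n)))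
    (hskew : ∀ A ∈ 𝔤, ∀ i j : Fin n, A (j, i) = - A (i, j))
    (hbracket : ∀ A ∈ 𝔤, ∀ B ∈ 𝔤, mmulE A B - mmulE B A ∈ 𝔤)
    (hproper : ∃ A : EuclideanSpace ℝ (Fin n × Fin n),
        (∀ i j : Fin n, A (j, i) = - A (i, j)) ∧ A ∉ 𝔤) :
    Function.Injective fun X : EuclideanSpace ℝ (Fin n) =>
      fun i : Fin n =>
        wedgeE (EuclideanSpace.single i (1:ℝ)) X -
          (Submodule.orthogonalProjectionOnto 𝔤 (wedgeE (EuclideanSpace.single i (1:ℝ)) X) :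
            EuclideanSpace ℝ (Fin n × Fin n)) := by
  intro X Y h
  rw [← sub_eq_zero]
  set Z : EuclideanSpace ℝ (Fin n) := X - Y with hZ
  by_contra hne
  -- each eᵢ ∧ Z lies in 𝔤
  have hmem : ∀ i : Fin n,
      wedgeE (EuclideanSpace.single i (1:ℝ)) Z ∈ 𝔤 := by
    intro i
    have hi := congrFun h i
    dsimp only at hi
    have h2 : wedgeE (EuclideanSpace.single i (1:ℝ)) Z =
        ((Submodule.orthogonalProjectionOnto 𝔤 (wedgeE (EuclideanSpace.single i (1:ℝ)) X) -
          Submodule.orthogonalProjectionOnto 𝔤 (wedgeE (EuclideanSpace.single i (1:ℝ)) Y) :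
          𝔤) : EuclideanSpace ℝ (Fin n × Fin n)) := by
      rw [Submodule.coe_sub, ← wedgeE_sub]
      linear_combination (norm := abel) hi
    rw [h2]
    exact SetLike.coe_mem _
  -- Z has a nonzero coordinate
  have hex : ∃ k, Z k ≠ 0 := by
    by_contra hall
    push_neg at hall
    exact hne (by ext k; simp [hall k])
  obtain ⟨k₀, hk₀⟩ := hex
  set c : ℝ := ∑ k, Z k * Z k with hc
  have hcpos : 0 < c :=
    Finset.sum_pos' (fun k _ => mul_self_nonneg _)
      ⟨k₀, Finset.mem_univ _, mul_self_pos.mpr hk₀⟩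
  -- every elementary wedge eᵢ ∧ eⱼ lies in 𝔤
  have hwedge : ∀ i j : Fin n,
      wedgeE (EuclideanSpace.single i (1:ℝ)) (EuclideanSpace.single j (1:ℝ)) ∈ 𝔤 := by
    intro i j
    have key : wedgeE (EuclideanSpace.single i (1:ℝ)) (EuclideanSpace.single j (1:ℝ))
        = c⁻¹ • ((mmulE (wedgeE (EuclideanSpace.single i (1:ℝ)) Z)
              (wedgeE (EuclideanSpace.single j (1:ℝ)) Z) -
            mmulE (wedgeE (EuclideanSpace.single j (1:ℝ)) Z)
              (wedgeE (EuclideanSpace.single i (1:ℝ)) Z)) -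
          Z i • wedgeE (EuclideanSpace.single j (1:ℝ)) Z +
          Z j • wedgeE (EuclideanSpace.single i (1:ℝ)) Z) := by
      ext p
      obtain ⟨a, b⟩ := p
      simp only [PiLp.smul_apply, PiLp.sub_apply, PiLp.add_apply, smul_eq_mul,
        mmulE_apply, wedgeE_apply, EuclideanSpace.single_apply]
      rw [eq_inv_mul_iff_mul_eq₀ (ne_of_gt hcpos)]
      rw [hc]
      simp only [sub_mul, mul_sub, ite_mul, mul_ite, one_mul, mul_one, zero_mul, mul_zero]
      simp only [Finset.sum_ite_irrel, Finset.sum_sub_distrib, Finset.sum_const_zero,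
        Finset.sum_ite_eq, Finset.sum_ite_eq', Finset.mem_univ, if_true]
      split_ifs <;> first | ring1 | (subst_vars; exact absurd rfl (by assumption))
    rw [key]
    exact Submodule.smul_mem _ _
      (Submodule.add_mem _
        (Submodule.sub_mem _
          (hbracket _ (hmem i) _ (hmem j))
          (Submodule.smul_mem _ _ (hmem j)))
        (Submodule.smul_mem _ _ (hmem i)))
  -- hence every skew matrix lies in 𝔤, contradicting properness
  obtain ⟨A, hAskew, hAnot⟩ := hproper
  apply hAnot
  have hrep : A = ∑ i : Fin n, ∑ j : Fin n, (-(1/2) * A (i, j)) •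
      wedgeE (EuclideanSpace.single i (1:ℝ)) (EuclideanSpace.single j (1:ℝ)) := by
    apply (WithLp.linearEquiv 2 ℝ ((Fin n × Fin n) → ℝ)).injective
    rw [map_sum]
    simp only [map_sum, map_smul]
    funext p
    obtain ⟨a, b⟩ := p
    simp only [Finset.sum_apply, Pi.smul_apply, smul_eq_mul]
    have he : ∀ (B : EuclideanSpace ℝ (Fin n × Fin n)) (q : Fin n × Fin n),
        (WithLp.linearEquiv 2 ℝ ((Fin n × Fin n) → ℝ)) B q = B q := fun _ _ => rfl
    simp only [he, wedgeE_apply, EuclideanSpace.single_apply]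
    simp only [mul_ite, ite_mul, mul_one, one_mul, mul_zero, zero_mul, mul_sub]
    simp only [Finset.sum_ite_irrel, Finset.sum_sub_distrib, Finset.sum_const_zero,
      Finset.sum_ite_eq, Finset.sum_ite_eq', Finset.mem_univ, if_true]
    have hab := hAskew a b
    rw [hab]
    ring
  rw [hrep]
  exact Submodule.sum_mem _ fun i _ => Submodule.sum_mem _ fun j _ =>
    Submodule.smul_mem _ _ (hwedge i j)

end
end

section
/- Let T = e₅ ∧ (e₁∧e₃ − e₆∧e₇) + e₄ ∧ (e₃∧e₇ + e₁∧e₆) ∈ Λ³(ℝ⁷) (in an orthonormal basis e₁,…,e₇). Then the symmetric bilinear form S with entries S_{ij} = Σ_{m,n} T_{imn}·T_{jmn} is the diagonal matrix diag(4, 0, 4, 4, 4, 4, 4). -/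
set_option maxHeartbeats 1000000
set_option linter.unreachableTactic false
set_option linter.unnecessarySeqFocus false
set_option linter.unusedTactic false

private def fT : Fin 7 → Fin 7 → Fin 7 → ℝ := fun i j k =>
  match i.val, j.val, k.val with
  | 0, 2, 4 => 1
  | 2, 4, 0 => 1
  | 4, 0, 2 => 1
  | 2, 0, 4 => -1
  | 0, 4, 2 => -1
  | 4, 2, 0 => -1
  | 4, 5, 6 => -1
  | 5, 6, 4 => -1
  | 6, 4, 5 => -1
  | 5, 4, 6 => 1
  | 4, 6, 5 => 1
  | 6, 5, 4 => 1
  | 2, 3, 6 => 1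
  | 3, 6, 2 => 1
  | 6, 2, 3 => 1
  | 3, 2, 6 => -1
  | 2, 6, 3 => -1
  | 6, 3, 2 => -1
  | 0, 3, 5 => 1
  | 3, 5, 0 => 1
  | 5, 0, 3 => 1
  | 3, 0, 5 => -1
  | 0, 5, 3 => -1
  | 5, 3, 0 => -1
  | _, _, _ => 0

private def gT : Fin 7 → Fin 7 → Fin 7 → ℤ := fun i j k =>
  match i.val, j.val, k.val with
  | 0, 2, 4 => 1
  | 2, 4, 0 => 1
  | 4, 0, 2 => 1
  | 2, 0, 4 => -1
  | 0, 4, 2 => -1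
  | 4, 2, 0 => -1
  | 4, 5, 6 => -1
  | 5, 6, 4 => -1
  | 6, 4, 5 => -1
  | 5, 4, 6 => 1
  | 4, 6, 5 => 1
  | 6, 5, 4 => 1
  | 2, 3, 6 => 1
  | 3, 6, 2 => 1
  | 6, 2, 3 => 1
  | 3, 2, 6 => -1
  | 2, 6, 3 => -1
  | 6, 3, 2 => -1
  | 0, 3, 5 => 1
  | 3, 5, 0 => 1
  | 5, 0, 3 => 1
  | 3, 0, 5 => -1
  | 0, 5, 3 => -1
  | 5, 3, 0 => -1
  | _, _, _ => 0

private lemma fT_eq_gT : ∀ i j k, fT i j k = (gT i j k : ℝ) := by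
  intro i j k
  fin_cases i <;> fin_cases j <;> fin_cases k <;>
    first
      | (show (1:ℝ) = ((1:ℤ):ℝ); norm_num)
      | (show (-1:ℝ) = ((-1:ℤ):ℝ); norm_num)
      | (show (0:ℝ) = ((0:ℤ):ℝ); norm_num)

private lemma gT_key : ∀ i j : Fin 7, (∑ m, ∑ n, gT i m n * gT j m n) =
    if i = j then ![4, 0, 4, 4, 4, 4, 4] i else 0 := by
  decide +kernel




/- STATEMENT 18: for the 3-form
T = e₅ ∧ (e₁∧e₃ − e₆∧e₇) + e₄ ∧ (e₃∧e₇ + e₁∧e₆) on ℝ⁷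
(components totally antisymmetric, generated by T₁₃₅ = 1, T₅₆₇ = −1,
T₃₄₇ = 1, T₁₄₆ = 1, all components outside these orbits vanishing; here the
basis is 0-indexed, so e₁,…,e₇ ↦ 0,…,6), the symmetric bilinear form
S_{ij} = Σ_{m,n} T_{imn}·T_{jmn} equals diag(4, 0, 4, 4, 4, 4, 4). -/
theorem stmt18 (T : Fin 7 → Fin 7 → Fin 7 → ℝ)
    (hanti1 : ∀ i j k, T i j k = -T j i k)
    (hanti2 : ∀ i j k, T i j k = -T i k j)
    (h135 : T 0 2 4 = 1) (h567 : T 4 5 6 = -1)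
    (h347 : T 2 3 6 = 1) (h146 : T 0 3 5 = 1)
    (hzero : ∀ i j k : Fin 7,
      ({i, j, k} : Finset (Fin 7)) ≠ {0, 2, 4} →
      ({i, j, k} : Finset (Fin 7)) ≠ {4, 5, 6} →
      ({i, j, k} : Finset (Fin 7)) ≠ {2, 3, 6} →
      ({i, j, k} : Finset (Fin 7)) ≠ {0, 3, 5} → T i j k = 0) :
    ∀ i j : Fin 7, (∑ m, ∑ n, T i m n * T j m n) =
      Matrix.diagonal ![4, 0, 4, 4, 4, 4, 4] i j := by
  have A1 : T 2 0 4 = (-1:ℝ) := by rw [hanti1 2 0 4, h135] <;> norm_num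
  have A2 : T 0 4 2 = (-1:ℝ) := by rw [hanti2 0 4 2, h135] <;> norm_num
  have A3 : T 2 4 0 = (1:ℝ) := by rw [hanti2 2 4 0, A1] <;> norm_num
  have A4 : T 4 0 2 = (1:ℝ) := by rw [hanti1 4 0 2, A2] <;> norm_num
  have A5 : T 4 2 0 = (-1:ℝ) := by rw [hanti1 4 2 0, A3] <;> norm_num
  have B1 : T 5 4 6 = (1:ℝ) := by rw [hanti1 5 4 6, h567] <;> norm_num
  have B2 : T 4 6 5 = (1:ℝ) := by rw [hanti2 4 6 5, h567] <;> norm_num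
  have B3 : T 5 6 4 = (-1:ℝ) := by rw [hanti2 5 6 4, B1] <;> norm_num
  have B4 : T 6 4 5 = (-1:ℝ) := by rw [hanti1 6 4 5, B2] <;> norm_num
  have B5 : T 6 5 4 = (1:ℝ) := by rw [hanti1 6 5 4, B3] <;> norm_num
  have C1 : T 3 2 6 = (-1:ℝ) := by rw [hanti1 3 2 6, h347] <;> norm_num
  have C2 : T 2 6 3 = (-1:ℝ) := by rw [hanti2 2 6 3, h347] <;> norm_num
  have C3 : T 3 6 2 = (1:ℝ) := by rw [hanti2 3 6 2, C1] <;> norm_num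
  have C4 : T 6 2 3 = (1:ℝ) := by rw [hanti1 6 2 3, C2] <;> norm_num
  have C5 : T 6 3 2 = (-1:ℝ) := by rw [hanti1 6 3 2, C3] <;> norm_num
  have D1 : T 3 0 5 = (-1:ℝ) := by rw [hanti1 3 0 5, h146] <;> norm_num
  have D2 : T 0 5 3 = (-1:ℝ) := by rw [hanti2 0 5 3, h146] <;> norm_num
  have D3 : T 3 5 0 = (1:ℝ) := by rw [hanti2 3 5 0, D1] <;> norm_num
  have D4 : T 5 0 3 = (1:ℝ) := by rw [hanti1 5 0 3, D2] <;> norm_num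
  have D5 : T 5 3 0 = (-1:ℝ) := by rw [hanti1 5 3 0, D3] <;> norm_num
  have hT : ∀ i j k, T i j k = fT i j k := by
    intro i j k
    fin_cases i <;> fin_cases j <;> fin_cases k <;>
      first
        | assumption
        | exact hzero _ _ _ (by decide) (by decide) (by decide) (by decide)
  intro i j
  simp only [hT, fT_eq_gT]
  have h := congrArg (fun z : ℤ => (z : ℝ)) (gT_key i j)
  push_cast at h
  rw [h]
  fin_cases i <;> fin_cases j <;> simp [Matrix.diagonal]
end
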